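/- Let A₁,…,Aₙ, B ∈ ℝ², set A_{n+1} := A₁, and suppose det(Aᵢ − B, A_{i+1} − B) > 0 for all i = 1,…,n. Then B lies in the interior of the convex hull of {A₁,…,Aₙ}. -/

import Mathlib

/-- Determinant of the 2×2 matrix with columns `u` and `v`. -/
def det2 (u v : ℝ × ℝ) : ℝ := u.1 * v.2 - u.2 * v.1

lemma cyclic_contra (n : ℕ) (hn : 0 < n) (α β : ZMod n → ℝ) (hβ : ∀ i, 0 < β i)
    (h : ∀ i, α (i + 1) * β i < α i * β (i + 1)) : False := by
  haveI : NeZero n := ⟨hn.ne'⟩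
  set s : ℕ → ℝ := fun k => α (k : ZMod n) / β (k : ZMod n) with hs
  have hstep : ∀ k : ℕ, s (k + 1) < s k := by
    intro k
    have := h (k : ZMod n)
    simp only [hs]
    rw [div_lt_div_iff₀ (hβ _) (hβ _)]
    push_cast
    exact h _
  have hanti : StrictAnti s := strictAnti_nat_of_succ_lt hstep
  have := hanti hn
  rw [show s n = s 0 by simp [hs, ZMod.natCast_self]] at this
  exact lt_irrefl _ this

/-- If all the cyclic determinants `det (A i − B, A (i+1) − B)` are positive,
then `B` lies in the interior of the convex hull of the points `A i`. -/
theorem mem_interior_of_det_pos (n : ℕ) (hn : 0 < n) (A : ZMod n → ℝ × ℝ) (B : ℝ × ℝ)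
    (hdet : ∀ i : ZMod n, 0 < det2 (A i - B) (A (i + 1) - B)) :
    B ∈ interior (convexHull ℝ (Set.range A)) := by
  haveI : NeZero n := ⟨hn.ne'⟩
  set S : Set (ℝ × ℝ) := {x | ∀ i : ZMod n, 0 < det2 (A i - x) (A (i + 1) - x)} with hS
  have hopen : IsOpen S := by
    have : S = ⋂ i : ZMod n, {x | 0 < det2 (A i - x) (A (i + 1) - x)} := by
      ext x; simp [hS, Set.mem_iInter]
    rw [this]
    apply isOpen_iInter_of_finite
    intro i
    apply isOpen_lt continuous_const
    simp only [det2]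
    fun_prop
  have hsub : S ⊆ convexHull ℝ (Set.range A) := by
    intro x hx
    by_contra hxC
    obtain ⟨f, u, hfa, hux⟩ := geometric_hahn_banach_closed_point
      (convex_convexHull ℝ _) ((Set.finite_range A).isClosed_convexHull (𝕜 := ℝ)) hxC
    set c1 := f (1, 0) with hc1
    set c2 := f (0, 1) with hc2
    have hf : ∀ v : ℝ × ℝ, f v = c1 * v.1 + c2 * v.2 := by
      intro v
      have hv : v = v.1 • ((1 : ℝ), (0 : ℝ)) + v.2 • ((0 : ℝ), (1 : ℝ)) := by
        simp [Prod.ext_iff]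
      rw [hv, map_add, map_smul, map_smul, ← hc1, ← hc2]
      simp [smul_eq_mul]
      ring
    have hfai : ∀ i : ZMod n, f (A i) < f x := fun i =>
      lt_trans (hfa (A i) (subset_convexHull ℝ _ (Set.mem_range_self i))) hux
    have hβ : ∀ i : ZMod n, 0 < f x - f (A i) := fun i => by linarith [hfai i]
    have hcc : 0 < c1 ^ 2 + c2 ^ 2 := by
      rcases eq_or_ne (c1, c2) (0, 0) with hc | hc
      · exfalso
        have h0 := hβ 0
        rw [hf x, hf (A 0)] at h0
        simp [Prod.ext_iff] at hc
        rw [hc.1, hc.2] at h0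
        linarith
      · have : c1 ≠ 0 ∨ c2 ≠ 0 := by
          by_contra hcon
          push_neg at hcon
          exact hc (by simp [hcon.1, hcon.2])
        rcases this with h | h
        · positivity
        · positivity
    apply cyclic_contra n hn (fun i => c1 * (A i - x).2 - c2 * (A i - x).1)
      (fun i => f x - f (A i)) hβ
    intro i
    have key : (c1 * (A i - x).2 - c2 * (A i - x).1) * (f x - f (A (i + 1)))
        - (c1 * (A (i + 1) - x).2 - c2 * (A (i + 1) - x).1) * (f x - f (A i))
        = (c1 ^ 2 + c2 ^ 2) * det2 (A i - x) (A (i + 1) - x) := by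
      rw [hf x, hf (A i), hf (A (i + 1))]
      simp only [det2, Prod.fst_sub, Prod.snd_sub]
      ring
    have := mul_pos hcc (hx i)
    nlinarith [this, key]
  exact interior_maximal hsub hopen hdet
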